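/- Let p ∈ (1,∞), L > 0, G ≥ 0 a real number, and let f : ℝ^N × ℝ^{Nn} → [0,∞) be convex and satisfy f(u,ξ) ≤ L(|ξ|^p + |u|^p + G) for all (u,ξ) ∈ ℝ^N × ℝ^{Nn}. Then there exists a constant c = c(p,L) such that |f(u_1,ξ_1) − f(u_2,ξ_2)| ≤ c [ (|ξ_1| + |ξ_2| + |u_1| + |u_2|)^{p−1} + G^{(p−1)/p} ] (|u_1 − u_2| + |ξ_1 − ξ_2|) holds for all (u_1,ξ_1), (u_2,ξ_2) ∈ ℝ^N × ℝ^{Nn}. -/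
import Mathlib


open Real

lemma convex_growth_lip {E : Type*} [NormedAddCommGroup E] [NormedSpace ℝ E]
    (f : E → ℝ) (hf0 : ∀ z, 0 ≤ f z) (hc : ConvexOn ℝ Set.univ f)
    (r M : ℝ) (hr : 0 < r) (hM : ∀ z : E, ‖z‖ ≤ 2 * r → f z ≤ M)
    (x y : E) (hx : ‖x‖ ≤ r) :
    f x - f y ≤ M / r * ‖x - y‖ := by
  have hM0 : 0 ≤ M := le_trans (hf0 0) (hM 0 (by simp; positivity))
  by_cases hxy : x = y
  · simp only [hxy, sub_self, norm_zero, mul_zero]; linarith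
  · set d : ℝ := ‖x - y‖ with hd
    have hd0 : 0 < d := by simpa [hd] using norm_pos_iff.mpr (sub_ne_zero.mpr hxy)
    have hdne : d ≠ 0 := hd0.ne'
    set t : ℝ := d / (d + r) with ht
    have hdr : 0 < d + r := by linarith
    have hdrne : d + r ≠ 0 := hdr.ne'
    have ht0 : 0 ≤ t := by positivity
    have ht1 : t ≤ 1 := by rw [ht, div_le_one hdr]; linarith
    set w : E := x + (r / d) • (x - y) with hw
    have hweq : (1 - t) • y + t • w = x := by
      rw [hw, ht]
      match_scalars <;> field_simp <;> ring
    have hwnorm : ‖w‖ ≤ 2 * r := by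
      calc ‖w‖ ≤ ‖x‖ + ‖(r / d) • (x - y)‖ := norm_add_le _ _
        _ = ‖x‖ + (r / d) * d := by
            rw [norm_smul, Real.norm_of_nonneg (by positivity)]
        _ = ‖x‖ + r := by field_simp
        _ ≤ 2 * r := by linarith
    have hconv := hc.2 (Set.mem_univ y) (Set.mem_univ w)
      (show (0:ℝ) ≤ 1 - t by linarith) ht0 (by ring)
    rw [hweq] at hconv
    simp only [smul_eq_mul] at hconv
    have hfw : f w ≤ M := hM w hwnorm
    have h1 : f x - f y ≤ t * M := by nlinarith [hf0 y, hf0 w]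
    have htd : t ≤ d / r := div_le_div₀ hd0.le le_rfl hr (by linarith)
    have h2 : t * M ≤ M / r * d :=
      le_of_le_of_eq (mul_le_mul_of_nonneg_right htd hM0) (by ring)
    linarith

lemma two_rpow_aux {a b q : ℝ} (ha : 0 ≤ a) (hb : 0 ≤ b) (hq : 0 ≤ q) :
    (a + b) ^ q ≤ 2 ^ q * (a ^ q + b ^ q) := by
  have h2 : (0:ℝ) ≤ 2 ^ q := Real.rpow_nonneg (by norm_num) q
  rcases le_total a b with h | h
  · calc (a + b) ^ q ≤ (2 * b) ^ q :=
        Real.rpow_le_rpow (by linarith) (by linarith) hq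
      _ = 2 ^ q * b ^ q := Real.mul_rpow (by norm_num) hb
      _ ≤ 2 ^ q * (a ^ q + b ^ q) := by nlinarith [Real.rpow_nonneg ha q]
  · calc (a + b) ^ q ≤ (2 * a) ^ q :=
        Real.rpow_le_rpow (by linarith) (by linarith) hq
      _ = 2 ^ q * a ^ q := Real.mul_rpow (by norm_num) ha
      _ ≤ 2 ^ q * (a ^ q + b ^ q) := by nlinarith [Real.rpow_nonneg hb q]

/-- Local Lipschitz estimate: if `f : ℝ^N × ℝ^{Nn} → [0,∞)` is convex and satisfies the
`p`-growth condition `f(u,ξ) ≤ L(|ξ|^p + |u|^p + G)`, then there is `c = c(p,L)` such that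
`|f(u₁,ξ₁) − f(u₂,ξ₂)| ≤ c [(|ξ₁|+|ξ₂|+|u₁|+|u₂|)^{p−1} + G^{(p−1)/p}] (|u₁−u₂| + |ξ₁−ξ₂|)`. -/
theorem local_lipschitz_estimate (N n : ℕ) (p L : ℝ) (hp : 1 < p) (hL : 0 < L) :
    ∃ c : ℝ, 0 < c ∧ ∀ G : ℝ, 0 ≤ G →
      ∀ f : EuclideanSpace ℝ (Fin N) → EuclideanSpace ℝ (Fin (N * n)) → ℝ,
        (∀ u ξ, 0 ≤ f u ξ) →
        ConvexOn ℝ Set.univ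
          (fun z : EuclideanSpace ℝ (Fin N) × EuclideanSpace ℝ (Fin (N * n)) =>
            f z.1 z.2) →
        (∀ u ξ, f u ξ ≤ L * (‖ξ‖ ^ p + ‖u‖ ^ p + G)) →
        ∀ u₁ u₂ : EuclideanSpace ℝ (Fin N),
        ∀ ξ₁ ξ₂ : EuclideanSpace ℝ (Fin (N * n)),
          |f u₁ ξ₁ - f u₂ ξ₂| ≤
            c * ((‖ξ₁‖ + ‖ξ₂‖ + ‖u₁‖ + ‖u₂‖) ^ (p - 1) + G ^ ((p - 1) / p)) *
              (‖u₁ - u₂‖ + ‖ξ₁ - ξ₂‖) := by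
  have hp0 : (0:ℝ) < p := by linarith
  have hpne : p ≠ 0 := hp0.ne'
  refine ⟨L * (2 * 2 ^ p + 1) * 2 ^ (p - 1), by positivity, ?_⟩
  intro G hG f hf0 hconv hgrow u₁ u₂ ξ₁ ξ₂
  set S : ℝ := ‖ξ₁‖ + ‖ξ₂‖ + ‖u₁‖ + ‖u₂‖ with hS
  have hS0 : 0 ≤ S := by positivity
  set g : ℝ := G ^ (1 / p) with hg
  have hg0 : 0 ≤ g := Real.rpow_nonneg hG _
  have hgp : g ^ p = G := by
    rw [hg, ← Real.rpow_mul hG, show 1 / p * p = 1 by field_simp, Real.rpow_one]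
  set r : ℝ := S + g with hrdef
  rcases eq_or_lt_of_le (show (0:ℝ) ≤ r by positivity) with hr | hr
  · -- degenerate case: everything is zero
    have hn1 : ‖ξ₁‖ = 0 := by
      have := norm_nonneg ξ₁; have := norm_nonneg ξ₂
      have := norm_nonneg u₁; have := norm_nonneg u₂
      rw [hrdef, hS] at hr; linarith
    have hn2 : ‖ξ₂‖ = 0 := by
      have := norm_nonneg ξ₁; have := norm_nonneg ξ₂
      have := norm_nonneg u₁; have := norm_nonneg u₂
      rw [hrdef, hS] at hr; linarith
    have hn3 : ‖u₁‖ = 0 := by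
      have := norm_nonneg ξ₁; have := norm_nonneg ξ₂
      have := norm_nonneg u₁; have := norm_nonneg u₂
      rw [hrdef, hS] at hr; linarith
    have hn4 : ‖u₂‖ = 0 := by
      have := norm_nonneg ξ₁; have := norm_nonneg ξ₂
      have := norm_nonneg u₁; have := norm_nonneg u₂
      rw [hrdef, hS] at hr; linarith
    have e1 : ξ₁ = 0 := norm_eq_zero.mp hn1
    have e2 : ξ₂ = 0 := norm_eq_zero.mp hn2
    have e3 : u₁ = 0 := norm_eq_zero.mp hn3
    have e4 : u₂ = 0 := norm_eq_zero.mp hn4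
    subst e1; subst e2; subst e3; subst e4
    simp
  · -- main case
    set K : ℝ := 2 * 2 ^ p + 1 with hK
    have hK0 : 0 < K := by positivity
    set M : ℝ := L * K * r ^ p with hM_def
    have hrp0 : 0 ≤ r ^ p := Real.rpow_nonneg hr.le p
    have hM : ∀ z : EuclideanSpace ℝ (Fin N) × EuclideanSpace ℝ (Fin (N * n)),
        ‖z‖ ≤ 2 * r → f z.1 z.2 ≤ M := by
      intro z hz
      have hz1 : ‖z.1‖ ≤ 2 * r := le_trans (norm_fst_le z) hz
      have hz2 : ‖z.2‖ ≤ 2 * r := le_trans (norm_snd_le z) hz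
      have e1 : ‖z.2‖ ^ p ≤ 2 ^ p * r ^ p := by
        calc ‖z.2‖ ^ p ≤ (2 * r) ^ p :=
            Real.rpow_le_rpow (norm_nonneg _) hz2 hp0.le
          _ = 2 ^ p * r ^ p := Real.mul_rpow (by norm_num) hr.le
      have e2 : ‖z.1‖ ^ p ≤ 2 ^ p * r ^ p := by
        calc ‖z.1‖ ^ p ≤ (2 * r) ^ p :=
            Real.rpow_le_rpow (norm_nonneg _) hz1 hp0.le
          _ = 2 ^ p * r ^ p := Real.mul_rpow (by norm_num) hr.le
      have e3 : G ≤ r ^ p := by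
        rw [← hgp]
        exact Real.rpow_le_rpow hg0 (by rw [hrdef]; linarith) hp0.le
      have h2p1 : (1:ℝ) ≤ 2 ^ p := Real.one_le_rpow (by norm_num) hp0.le
      calc f z.1 z.2 ≤ L * (‖z.2‖ ^ p + ‖z.1‖ ^ p + G) := hgrow z.1 z.2
        _ ≤ L * (2 ^ p * r ^ p + 2 ^ p * r ^ p + r ^ p) :=
            mul_le_mul_of_nonneg_left (by linarith) hL.le
        _ = M := by rw [hM_def, hK]; ring
    have hM0 : 0 ≤ M := by positivity
    have hx : ‖((u₁, ξ₁) : EuclideanSpace ℝ (Fin N) ×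
        EuclideanSpace ℝ (Fin (N * n)))‖ ≤ r := by
      rw [Prod.norm_def]
      have := norm_nonneg ξ₁; have := norm_nonneg ξ₂
      have := norm_nonneg u₁; have := norm_nonneg u₂
      apply max_le <;> (rw [hrdef, hS]; simp only []; linarith)
    have hy : ‖((u₂, ξ₂) : EuclideanSpace ℝ (Fin N) ×
        EuclideanSpace ℝ (Fin (N * n)))‖ ≤ r := by
      rw [Prod.norm_def]
      have := norm_nonneg ξ₁; have := norm_nonneg ξ₂
      have := norm_nonneg u₁; have := norm_nonneg u₂
      apply max_le <;> (rw [hrdef, hS]; simp only []; linarith)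
    set D : ℝ := ‖u₁ - u₂‖ + ‖ξ₁ - ξ₂‖ with hD_def
    have hD0 : 0 ≤ D := by positivity
    have hD : ‖((u₁, ξ₁) : EuclideanSpace ℝ (Fin N) ×
        EuclideanSpace ℝ (Fin (N * n))) - (u₂, ξ₂)‖ ≤ D := by
      have heq : ((u₁, ξ₁) : EuclideanSpace ℝ (Fin N) ×
          EuclideanSpace ℝ (Fin (N * n))) - (u₂, ξ₂) = (u₁ - u₂, ξ₁ - ξ₂) := rfl
      rw [heq, Prod.norm_def]
      have := norm_nonneg (u₁ - u₂); have := norm_nonneg (ξ₁ - ξ₂)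
      apply max_le <;> (rw [hD_def]; simp only []; linarith)
    have h12 : f u₁ ξ₁ - f u₂ ξ₂ ≤ M / r * ‖((u₁, ξ₁) : EuclideanSpace ℝ (Fin N) ×
        EuclideanSpace ℝ (Fin (N * n))) - (u₂, ξ₂)‖ :=
      convex_growth_lip _ (fun z => hf0 z.1 z.2) hconv r M hr hM (u₁, ξ₁) (u₂, ξ₂) hx
    have h21 : f u₂ ξ₂ - f u₁ ξ₁ ≤ M / r * ‖((u₂, ξ₂) : EuclideanSpace ℝ (Fin N) ×
        EuclideanSpace ℝ (Fin (N * n))) - (u₁, ξ₁)‖ :=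
      convex_growth_lip _ (fun z => hf0 z.1 z.2) hconv r M hr hM (u₂, ξ₂) (u₁, ξ₁) hy
    rw [norm_sub_rev] at h21
    have hMr0 : 0 ≤ M / r := div_nonneg hM0 hr.le
    have habs : |f u₁ ξ₁ - f u₂ ξ₂| ≤ M / r * D := by
      rw [abs_sub_le_iff]
      constructor
      · exact le_trans h12 (mul_le_mul_of_nonneg_left hD hMr0)
      · exact le_trans h21 (mul_le_mul_of_nonneg_left hD hMr0)
    have hrp1 : r ^ (p - 1) = r ^ p / r := by
      rw [Real.rpow_sub hr, Real.rpow_one]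
    have hgq : g ^ (p - 1) = G ^ ((p - 1) / p) := by
      rw [hg, ← Real.rpow_mul hG, show 1 / p * (p - 1) = (p - 1) / p by ring]
    have hr_bound : r ^ (p - 1) ≤ 2 ^ (p - 1) * (S ^ (p - 1) + G ^ ((p - 1) / p)) := by
      rw [← hgq, hrdef]
      exact two_rpow_aux hS0 hg0 (by linarith)
    have hB0 : 0 ≤ S ^ (p - 1) + G ^ ((p - 1) / p) := by
      have := Real.rpow_nonneg hS0 (p - 1)
      have := Real.rpow_nonneg hG ((p - 1) / p)
      linarith
    calc |f u₁ ξ₁ - f u₂ ξ₂| ≤ M / r * D := habs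
      _ = L * K * r ^ (p - 1) * D := by rw [hM_def, hrp1]; ring
      _ ≤ L * K * (2 ^ (p - 1) * (S ^ (p - 1) + G ^ ((p - 1) / p))) * D := by
          apply mul_le_mul_of_nonneg_right _ hD0
          exact mul_le_mul_of_nonneg_left hr_bound (by positivity)
      _ = L * (2 * 2 ^ p + 1) * 2 ^ (p - 1) *
            (S ^ (p - 1) + G ^ ((p - 1) / p)) * D := by rw [hK]; ring
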